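/- The Gentzkow–Shapiro slant index is first-order partial least squares (Appendix A.1): let n ≥ 1, y ∈ ℝ^n with Σ_i (y_i − ȳ)² > 0, and f_{ij} ∈ ℝ for i = 1,…,n, j = 1,…,p. For each j, let (a_j, b_j) be the minimizer over (a, b) ∈ ℝ² of Σ_{i=1}^n (f_{ij} − a − b·y_i)². Then b_j = Σ_i (y_i − ȳ)(f_{ij} − f̄_j) / Σ_i (y_i − ȳ)² for every j; and if Σ_{j=1}^p b_j² > 0, then there exist constants A ∈ ℝ and B > 0 such that the slant index z_i = Σ_{j=1}^p b_j (f_{ij} − a_j) / Σ_{j=1}^p b_j² satisfies z_i = A + B·Σ_{j=1}^p ĉ_j f_{ij} for every i, where ĉ_j = (1/n)Σ_i (y_i − ȳ)(f_{ij} − f̄_j) is the sample covariance of the j-th frequency with y. Hence slant is, up to a uniform shift and positive scaling, the projection of frequencies onto their covariances with y (the first PLS direction). -/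

import Mathlib

open Real Finset

lemma quad_nonneg_zero (c d : ℝ) (h : ∀ t : ℝ, 0 ≤ c * t ^ 2 - 2 * d * t) : d = 0 := by
  by_contra hd
  have hs : (0:ℝ) < 1 / (|c| + 1) := by positivity
  set s : ℝ := 1 / (|c| + 1) with hsdef
  have hcs : c * s < 2 := by
    have h1 : c * s ≤ |c| * s := by
      apply mul_le_mul_of_nonneg_right (le_abs_self c) hs.le
    have h2 : |c| * s < 1 := by
      rw [hsdef]
      rw [mul_one_div, div_lt_one (by positivity)]
      linarith
    linarith
  have hd2 : 0 < d ^ 2 := by positivity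
  have := h (d * s)
  nlinarith [mul_pos hd2 hs]

theorem slant_is_first_order_PLS
    (n p : ℕ) (hn : 1 ≤ n)
    (y : Fin n → ℝ)
    (hy : 0 < ∑ i, (y i - (∑ i', y i') / n) ^ 2)
    (f : Fin n → Fin p → ℝ)
    (a b : Fin p → ℝ)
    (hab : ∀ j : Fin p, ∀ a' b' : ℝ,
      ∑ i, (f i j - (a j + b j * y i)) ^ 2 ≤ ∑ i, (f i j - (a' + b' * y i)) ^ 2) :
    (∀ j : Fin p,
      b j = (∑ i, (y i - (∑ i', y i') / n) * (f i j - (∑ i', f i' j) / n))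
              / ∑ i, (y i - (∑ i', y i') / n) ^ 2) ∧
    (0 < ∑ j, b j ^ 2 →
      ∃ A B : ℝ, 0 < B ∧ ∀ i : Fin n,
        (∑ j, b j * (f i j - a j)) / ∑ j, b j ^ 2
          = A + B * ∑ j,
              ((1 / n) * ∑ i', (y i' - (∑ i'', y i'') / n)
                  * (f i' j - (∑ i'', f i'' j) / n)) * f i j) := by
  have hn0 : (0:ℝ) < n := by exact_mod_cast Nat.lt_of_lt_of_le Nat.zero_lt_one hn
  have hnne : (n:ℝ) ≠ 0 := ne_of_gt hn0
  set Sy : ℝ := ∑ i', y i' with hSy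
  set Syy2 : ℝ := ∑ i, (y i) ^ 2 with hSyy2
  -- variance expansion
  have hvar : ∑ i, (y i - Sy / n) ^ 2 = Syy2 - Sy ^ 2 / n := by
    have : ∀ i : Fin n, (y i - Sy / n) ^ 2
        = y i ^ 2 - (2 * (Sy / n)) * y i + (Sy / n) ^ 2 := by intro i; ring
    rw [Finset.sum_congr rfl fun i _ => this i]
    rw [Finset.sum_add_distrib, Finset.sum_sub_distrib, ← Finset.mul_sum,
      Finset.sum_const, Finset.card_univ, Fintype.card_fin, nsmul_eq_mul]
    field_simp
    ring
  -- covariance expansion (per j)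
  have hcov : ∀ j : Fin p,
      ∑ i, (y i - Sy / n) * (f i j - (∑ i', f i' j) / n)
        = (∑ i, y i * f i j) - Sy * (∑ i', f i' j) / n := by
    intro j
    set Sf : ℝ := ∑ i', f i' j with hSf
    have : ∀ i : Fin n, (y i - Sy / n) * (f i j - Sf / n)
        = y i * f i j - (Sf / n) * y i - (Sy / n) * f i j + (Sy / n) * (Sf / n) := by
      intro i; ring
    rw [Finset.sum_congr rfl fun i _ => this i]
    rw [Finset.sum_add_distrib, Finset.sum_sub_distrib, Finset.sum_sub_distrib,
      ← Finset.mul_sum, ← Finset.mul_sum,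
      Finset.sum_const, Finset.card_univ, Fintype.card_fin, nsmul_eq_mul]
    field_simp
    ring
  -- normal equations
  have norm1 : ∀ j : Fin p, ∑ i, (f i j - (a j + b j * y i)) = 0 := by
    intro j
    apply quad_nonneg_zero (n : ℝ)
    intro t
    have h := hab j (a j + t) (b j)
    have expand : ∑ i, (f i j - (a j + t + b j * y i)) ^ 2
        = ∑ i, (f i j - (a j + b j * y i)) ^ 2
          - 2 * (∑ i, (f i j - (a j + b j * y i))) * t + n * t ^ 2 := by
      have : ∀ i : Fin n, (f i j - (a j + t + b j * y i)) ^ 2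
          = (f i j - (a j + b j * y i)) ^ 2
            - 2 * t * (f i j - (a j + b j * y i)) + t ^ 2 := by intro i; ring
      rw [Finset.sum_congr rfl fun i _ => this i]
      rw [Finset.sum_add_distrib, Finset.sum_sub_distrib, ← Finset.mul_sum,
        Finset.sum_const, Finset.card_univ, Fintype.card_fin, nsmul_eq_mul]
      ring
    rw [expand] at h
    linarith
  have norm2 : ∀ j : Fin p, ∑ i, (f i j - (a j + b j * y i)) * y i = 0 := by
    intro j
    apply quad_nonneg_zero Syy2
    intro t
    have h := hab j (a j) (b j + t)
    have expand : ∑ i, (f i j - (a j + (b j + t) * y i)) ^ 2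
        = ∑ i, (f i j - (a j + b j * y i)) ^ 2
          - 2 * (∑ i, (f i j - (a j + b j * y i)) * y i) * t + Syy2 * t ^ 2 := by
      have : ∀ i : Fin n, (f i j - (a j + (b j + t) * y i)) ^ 2
          = (f i j - (a j + b j * y i)) ^ 2
            - 2 * t * ((f i j - (a j + b j * y i)) * y i) + t ^ 2 * y i ^ 2 := by
        intro i; ring
      rw [Finset.sum_congr rfl fun i _ => this i]
      rw [Finset.sum_add_distrib, Finset.sum_sub_distrib, ← Finset.mul_sum,
        ← Finset.mul_sum, hSyy2]
      ring
    rw [expand] at h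
    linarith
  set Syy : ℝ := ∑ i, (y i - Sy / n) ^ 2 with hSyydef
  have hSyyne : Syy ≠ 0 := ne_of_gt hy
  have hb : ∀ j : Fin p,
      b j = (∑ i, (y i - Sy / n) * (f i j - (∑ i', f i' j) / n)) / Syy := by
    intro j
    have e1 := norm1 j
    have e2 := norm2 j
    set Sf : ℝ := ∑ i', f i' j with hSf
    set Syf : ℝ := ∑ i, y i * f i j with hSyf
    have e1' : Sf - (n * a j + b j * Sy) = 0 := by
      rw [Finset.sum_sub_distrib, Finset.sum_add_distrib, Finset.sum_const,
        Finset.card_univ, Fintype.card_fin, nsmul_eq_mul, ← Finset.mul_sum] at e1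
      linarith [e1]
    have e2' : Syf - (a j * Sy + b j * Syy2) = 0 := by
      have : ∀ i : Fin n, (f i j - (a j + b j * y i)) * y i
          = y i * f i j - a j * y i - b j * y i ^ 2 := by intro i; ring
      rw [Finset.sum_congr rfl fun i _ => this i, Finset.sum_sub_distrib,
        Finset.sum_sub_distrib, ← Finset.mul_sum, ← Finset.mul_sum] at e2
      linarith [e2]
    rw [hcov j, ← hSf, ← hSyf, eq_div_iff hSyyne, hvar]
    field_simp
    linear_combination Sy * e1' - (n:ℝ) * e2'
  refine ⟨hb, ?_⟩
  intro hS
  set S : ℝ := ∑ j, b j ^ 2 with hSdef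
  have hSne : S ≠ 0 := ne_of_gt hS
  refine ⟨-(∑ j, b j * a j) / S, n / (Syy * S), by positivity, ?_⟩
  intro i
  have hbc : ∀ j : Fin p, b j * f i j
      = (n / Syy) * (((1 / n) * ∑ i', (y i' - Sy / n)
          * (f i' j - (∑ i'', f i'' j) / n)) * f i j) := by
    intro j
    rw [hb j]
    generalize (∑ i', (y i' - Sy / n) * (f i' j - (∑ i'', f i'' j) / n)) = T
    field_simp
  have hsplit : ∑ j, b j * (f i j - a j)
      = (∑ j, b j * f i j) - ∑ j, b j * a j := by
    rw [← Finset.sum_sub_distrib]; apply Finset.sum_congr rfl; intro j _; ring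
  rw [hsplit, Finset.sum_congr rfl fun j _ => hbc j, ← Finset.mul_sum]
  field_simp
  ring
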